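/- Let H be a complex Hilbert space, n ≥ 1, and let u be a unitary element of Mₙ(B(H)), with entries u_{ij} ∈ B(H). Let (ξ_k) be a sequence of unit vectors in H such that ⟨(Σᵢ (1 − Re(u_{ii})))ξ_k, ξ_k⟩ → 0 as k → ∞. Then for all i, j one has ‖u_{ij} ξ_k − δ_{ij} ξ_k‖ → 0 as k → ∞ (where δ_{ij} ξ_k means ξ_k if i = j and 0 if i ≠ j). -/

import Mathlib

open Filter Topology

private lemma sqrt_aux (f : ℕ → ℝ) (hf : ∀ k, 0 ≤ f k)
    (h : Tendsto (fun k => f k ^ 2) atTop (𝓝 0)) : Tendsto f atTop (𝓝 0) := by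
  have := (Real.continuous_sqrt.tendsto 0).comp h
  simp only [Function.comp_def, Real.sqrt_zero] at this
  convert this using 2 with k
  rw [Real.sqrt_sq (hf _)]

private lemma col_aux {H : Type*} [NormedAddCommGroup H] [InnerProductSpace ℂ H]
    [CompleteSpace H] {n : ℕ} (u : Matrix (Fin n) (Fin n) (H →L[ℂ] H))
    (hu : u ∈ unitary (Matrix (Fin n) (Fin n) (H →L[ℂ] H))) (j : Fin n) (x : H) (hx : ‖x‖ = 1) :
    ∑ i, ‖u i j x‖ ^ 2 = 1 := by
  have h := hu.1
  have h2 : (star u * u) j j = (1 : Matrix (Fin n) (Fin n) (H →L[ℂ] H)) j j := by rw [h]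
  rw [Matrix.mul_apply, Matrix.one_apply_eq] at h2
  have h3 : ((∑ i, star u j i * u i j) x) = x := by rw [h2]; rfl
  have h4 : (∑ i, ((‖u i j x‖ : ℂ)) ^ 2) = inner ℂ x x := by
    calc ∑ i, ((‖u i j x‖ : ℂ)) ^ 2
        = ∑ i, (inner ℂ ((star u j i * u i j) x) x : ℂ) := by
          refine Finset.sum_congr rfl fun i _ => ?_
          rw [Matrix.star_apply, ContinuousLinearMap.star_eq_adjoint, ContinuousLinearMap.mul_apply,
            ContinuousLinearMap.adjoint_inner_left, inner_self_eq_norm_sq_to_K]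
          norm_cast
      _ = inner ℂ ((∑ i, star u j i * u i j) x) x := by
          rw [ContinuousLinearMap.sum_apply, sum_inner]
      _ = inner ℂ x x := by rw [h3]
  have h5 : ((∑ i, ‖u i j x‖ ^ 2 : ℝ) : ℂ) = ((1 : ℝ) : ℂ) := by
    push_cast
    rw [h4, inner_self_eq_norm_sq_to_K, hx]
    norm_num
  exact_mod_cast h5

private lemma inner_aux {H : Type*} [NormedAddCommGroup H] [InnerProductSpace ℂ H]
    [CompleteSpace H] (a : H →L[ℂ] H) (x : H) (hx : ‖x‖ = 1) :
    (inner ℂ (((1 : H →L[ℂ] H) - (2 : ℂ)⁻¹ • (a + ContinuousLinearMap.adjoint a)) x) x : ℂ)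
      = ((1 - (inner ℂ (a x) x : ℂ).re : ℝ) : ℂ) := by
  rw [ContinuousLinearMap.sub_apply, ContinuousLinearMap.smul_apply,
    ContinuousLinearMap.add_apply, ContinuousLinearMap.one_apply,
    inner_sub_left, inner_smul_left, inner_add_left,
    ContinuousLinearMap.adjoint_inner_left, ← inner_conj_symm x (a x),
    inner_self_eq_norm_sq_to_K, hx, Complex.add_conj]
  push_cast
  simp [Complex.ext_iff]

/-- Let `u` be a unitary `n × n` matrix of bounded operators on a complex Hilbert space `H`
and let `(ξ_k)` be a sequence of unit vectors with
`⟨(Σᵢ (1 - Re uᵢᵢ))ξ_k, ξ_k⟩ → 0`.  Then `‖uᵢⱼ ξ_k - δᵢⱼ ξ_k‖ → 0` for all `i, j`. -/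
theorem stmt5 {H : Type*} [NormedAddCommGroup H] [InnerProductSpace ℂ H] [CompleteSpace H]
    (n : ℕ) (hn : 0 < n) (u : Matrix (Fin n) (Fin n) (H →L[ℂ] H))
    (hu : u ∈ unitary (Matrix (Fin n) (Fin n) (H →L[ℂ] H)))
    (ξ : ℕ → H) (hξ : ∀ k, ‖ξ k‖ = 1)
    (hconv : Tendsto
      (fun k => (inner ℂ
        ((∑ i, ((1 : H →L[ℂ] H) -
            (2 : ℂ)⁻¹ • (u i i + ContinuousLinearMap.adjoint (u i i)))) (ξ k)) (ξ k) : ℂ))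
      atTop (𝓝 0)) :
    ∀ i j, Tendsto (fun k => ‖u i j (ξ k) - (if i = j then ξ k else 0)‖) atTop (𝓝 0) := by
  -- t i k = 1 - Re⟨u i i ξ_k, ξ_k⟩
  set t : Fin n → ℕ → ℝ := fun i k => 1 - (inner ℂ (u i i (ξ k)) (ξ k) : ℂ).re with ht_def
  -- norm bound: ‖u i j ξ_k‖ ≤ 1
  have hnormle : ∀ i j k, ‖u i j (ξ k)‖ ≤ 1 := by
    intro i j k
    have hcol := col_aux u hu j (ξ k) (hξ k)
    have h1 : ‖u i j (ξ k)‖ ^ 2 ≤ 1 := by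
      rw [← hcol]
      exact Finset.single_le_sum (f := fun i' => ‖u i' j (ξ k)‖ ^ 2)
        (fun i _ => sq_nonneg _) (Finset.mem_univ i)
    nlinarith [norm_nonneg (u i j (ξ k))]
  -- t i k ≥ 0
  have htnonneg : ∀ i k, 0 ≤ t i k := by
    intro i k
    have h1 : (inner ℂ (u i i (ξ k)) (ξ k) : ℂ).re ≤ 1 := by
      calc (inner ℂ (u i i (ξ k)) (ξ k) : ℂ).re ≤ ‖(inner ℂ (u i i (ξ k)) (ξ k) : ℂ)‖ :=
            Complex.re_le_norm _
        _ ≤ ‖u i i (ξ k)‖ * ‖ξ k‖ := norm_inner_le_norm _ _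
        _ ≤ 1 * 1 := by
            exact mul_le_mul (hnormle i i k) (le_of_eq (hξ k)) (norm_nonneg _) zero_le_one
        _ = 1 := one_mul 1
    simp only [ht_def]
    linarith
  -- sum of t tends to 0
  have htsum : Tendsto (fun k => ∑ i, t i k) atTop (𝓝 0) := by
    have heq : (fun k => (inner ℂ
        ((∑ i, ((1 : H →L[ℂ] H) -
            (2 : ℂ)⁻¹ • (u i i + ContinuousLinearMap.adjoint (u i i)))) (ξ k)) (ξ k) : ℂ))
        = fun k => ((∑ i, t i k : ℝ) : ℂ) := by
      funext k
      rw [ContinuousLinearMap.sum_apply, sum_inner, Complex.ofReal_sum]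
      exact Finset.sum_congr rfl fun i _ => inner_aux (u i i) (ξ k) (hξ k)
    rw [heq] at hconv
    have := (Complex.continuous_re.tendsto 0).comp hconv
    simpa [Function.comp_def] using this
  -- each t i tends to 0
  have hti : ∀ i, Tendsto (fun k => t i k) atTop (𝓝 0) := by
    intro i
    refine squeeze_zero (fun k => htnonneg i k) (fun k => ?_) htsum
    exact Finset.single_le_sum (fun i' _ => htnonneg i' k) (Finset.mem_univ i)
  -- diagonal convergence
  have hdiag : ∀ i, Tendsto (fun k => ‖u i i (ξ k) - ξ k‖) atTop (𝓝 0) := by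
    intro i
    refine sqrt_aux _ (fun k => norm_nonneg _) ?_
    have h2t : Tendsto (fun k => 2 * t i k) atTop (𝓝 0) := by
      simpa using (hti i).const_mul 2
    refine squeeze_zero (fun k => sq_nonneg _) (fun k => ?_) h2t
    have hns : ‖u i i (ξ k) - ξ k‖ ^ 2 = ‖u i i (ξ k)‖ ^ 2
        - 2 * (inner ℂ (u i i (ξ k)) (ξ k) : ℂ).re + ‖ξ k‖ ^ 2 := by
      exact_mod_cast @norm_sub_sq ℂ _ _ _ _ (u i i (ξ k)) (ξ k)
    have h1 : ‖u i i (ξ k)‖ ^ 2 ≤ 1 := by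
      nlinarith [hnormle i i k, norm_nonneg (u i i (ξ k))]
    have htk : t i k = 1 - (inner ℂ (u i i (ξ k)) (ξ k) : ℂ).re := rfl
    rw [hns, hξ k, htk]
    nlinarith
  intro i j
  by_cases hij : i = j
  · subst hij
    simpa using hdiag i
  · simp only [if_neg hij, sub_zero]
    refine sqrt_aux _ (fun k => norm_nonneg _) ?_
    -- ‖u j j ξ_k‖ → 1
    have hjj : Tendsto (fun k => ‖u j j (ξ k)‖) atTop (𝓝 1) := by
      have h1 : ∀ k, |‖u j j (ξ k)‖ - 1| ≤ ‖u j j (ξ k) - ξ k‖ := by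
        intro k
        calc |‖u j j (ξ k)‖ - 1| = |‖u j j (ξ k)‖ - ‖ξ k‖| := by rw [hξ k]
          _ ≤ ‖u j j (ξ k) - ξ k‖ := abs_norm_sub_norm_le _ _
      have h0 : Tendsto (fun k => ‖u j j (ξ k)‖ - 1) atTop (𝓝 0) := by
        refine squeeze_zero_norm (fun k => ?_) (hdiag j)
        simpa using h1 k
      have := h0.add_const 1
      simpa using this
    have hjj2 : Tendsto (fun k => 1 - ‖u j j (ξ k)‖ ^ 2) atTop (𝓝 0) := by
      have := (hjj.pow 2).const_sub 1
      simpa using this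
    refine squeeze_zero (fun k => sq_nonneg _) (fun k => ?_) hjj2
    have hcol := col_aux u hu j (ξ k) (hξ k)
    have hpair : ‖u i j (ξ k)‖ ^ 2 + ‖u j j (ξ k)‖ ^ 2 ≤ ∑ i', ‖u i' j (ξ k)‖ ^ 2 := by
      have hsp := Finset.sum_pair (f := fun i' => ‖u i' j (ξ k)‖ ^ 2) hij
      rw [← hsp]
      exact Finset.sum_le_sum_of_subset_of_nonneg (Finset.subset_univ _)
        (fun i' _ _ => sq_nonneg _)
    linarith [hpair, hcol.ge, hcol.le]
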